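/- Let M be a nonempty compact Hausdorff topological space, let ζ : C(M,ℝ) → ℝ be a functional, let φ : M → M be a homeomorphism satisfying ζ(H ∘ φ) = ζ(H) for every H ∈ C(M,ℝ), and let X ⊆ M be a nonempty closed subset that is superheavy for ζ. Then the image φ(X) is also superheavy for ζ, and consequently φ(X) ∩ X ≠ ∅. -/

import Mathlib

/-- A nonempty closed subset `X` of a compact space `M` is superheavy for a functional
`ζ : C(M,ℝ) → ℝ` if `inf_{x ∈ X} H x ≤ ζ H ≤ sup_{x ∈ X} H x` for all `H`. -/
def Superheavy {M : Type*} [TopologicalSpace M] (ζ : C(M, ℝ) → ℝ) (X : Set M) : Prop :=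
  ∀ H : C(M, ℝ), sInf (H '' X) ≤ ζ H ∧ ζ H ≤ sSup (H '' X)

/-- The image of a superheavy set under an invariance homeomorphism is superheavy;
in particular a superheavy set of an invariant functional is non-displaceable. -/
theorem superheavy_image_nondisplaceable {M : Type*} [TopologicalSpace M] [CompactSpace M]
    [T2Space M] [Nonempty M] (ζ : C(M, ℝ) → ℝ) (φ : M ≃ₜ M)
    (hinv : ∀ H : C(M, ℝ), ζ (H.comp (φ : C(M, M))) = ζ H)
    (X : Set M) (hXne : X.Nonempty) (hXcl : IsClosed X) (hX : Superheavy ζ X) :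
    Superheavy ζ (φ '' X) ∧ (φ '' X ∩ X).Nonempty := by
  have hsh : Superheavy ζ (φ '' X) := by
    intro H
    have himg : H '' (φ '' X) = (H.comp (φ : C(M, M))) '' X := by
      rw [← Set.image_comp]; rfl
    rw [himg, ← hinv H]
    exact hX (H.comp (φ : C(M, M)))
  refine ⟨hsh, ?_⟩
  by_contra hcon
  rw [Set.not_nonempty_iff_eq_empty] at hcon
  have hdisj : Disjoint X (φ '' X) := by
    rw [Set.disjoint_iff_inter_eq_empty, Set.inter_comm]; exact hcon
  have hXcl' : IsClosed (φ '' X) := (φ.isClosedMap X hXcl)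
  obtain ⟨f, hf0, hf1, _⟩ := exists_continuous_zero_one_of_isClosed hXcl hXcl' hdisj
  have hXne' : (φ '' X).Nonempty := hXne.image φ
  have hsup : sSup (f '' X) = 0 := by
    have : f '' X = {0} := by
      apply Set.eq_singleton_iff_nonempty_unique_mem.mpr
      exact ⟨hXne.image f, fun y ⟨x, hx, hxy⟩ => hxy ▸ hf0 hx⟩
    rw [this, csSup_singleton]
  have hinf : sInf (f '' (φ '' X)) = 1 := by
    have : f '' (φ '' X) = {1} := by
      apply Set.eq_singleton_iff_nonempty_unique_mem.mpr
      exact ⟨hXne'.image f, fun y ⟨x, hx, hxy⟩ => hxy ▸ hf1 hx⟩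
    rw [this, csInf_singleton]
  have h1 := (hX f).2
  have h2 := (hsh f).1
  rw [hsup] at h1
  rw [hinf] at h2
  linarith
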